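/- Let (ϑ_t) be an E_0-semigroup on B(H), ξ a unit vector, E^B_t = ϑ_t(ξξ*)H and E^A_t the intertwiner spaces. The isometries u'_t : E^A_t → E^B_t, x'_t ↦ x'_t ξ, reverse products: u'_{t+s}(x'_t y'_s) = u'_s(y'_s) · u'_t(x'_t), where the product on E^B spaces is y_s y_t := ϑ_t(y_s ξ*)y_t. Hence the Arveson system is anti-isomorphic to the Bhat system. -/

import Mathlib

open scoped InnerProductSpace

/-- The rank-one operator `u v* : z ↦ u⟨v,z⟩`. -/
noncomputable def rankOne {H : Type*} [NormedAddCommGroup H] [InnerProductSpace ℂ H]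
    (u v : H) : H →L[ℂ] H :=
  (innerSL ℂ v).smulRight u

/-- Normality (σ-weak continuity) of a map on `B(H)`, expressed via weak-operator
convergence of bounded nets. -/
def IsNormalMap {H : Type*} [NormedAddCommGroup H] [InnerProductSpace ℂ H]
    (ϑ : (H →L[ℂ] H) → (H →L[ℂ] H)) : Prop :=
  ∀ (ι : Type) (l : Filter ι) (f : ι → H →L[ℂ] H) (b : H →L[ℂ] H),
    (∀ i, ‖f i‖ ≤ 1) →
    (∀ g g' : H, Filter.Tendsto (fun i => ⟪g, f i g'⟫_ℂ) l (nhds ⟪g, b g'⟫_ℂ)) →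
    ∀ h h' : H, Filter.Tendsto (fun i => ⟪h, ϑ (f i) h'⟫_ℂ) l (nhds ⟪h, ϑ b h'⟫_ℂ)

/-- **The Arveson system is anti-isomorphic to the Bhat system.**
For members `ϑt, ϑs` of an E₀-semigroup on `B(H)` (so `ϑ_{t+s} = ϑt ∘ ϑs`) and a unit
vector `ξ`, the isometries `u'_r : E^A_r → E^B_r`, `x' ↦ x'ξ`, reverse products:
for intertwiners `x'` of `ϑt` and `y'` of `ϑs`,
`u'_{t+s}(x'y') = u'_s(y') · u'_t(x') = ϑt((y'ξ)ξ*)(x'ξ)`. -/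
theorem arveson_bhat_antiisomorphic {H : Type*} [NormedAddCommGroup H]
    [InnerProductSpace ℂ H] [CompleteSpace H]
    (ϑt ϑs ϑts : (H →L[ℂ] H) →⋆ₐ[ℂ] (H →L[ℂ] H))
    (hϑt : IsNormalMap (H := H) ϑt) (hϑs : IsNormalMap (H := H) ϑs)
    (hcomp : ∀ a, ϑts a = ϑt (ϑs a))
    (ξ : H) (hξ : ⟪ξ, ξ⟫_ℂ = 1)
    (x' y' : H →L[ℂ] H)
    (hx' : ∀ a, ϑt a * x' = x' * a)
    (hy' : ∀ a, ϑs a * y' = y' * a) :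
    (x' * y') ξ = ϑt (rankOne (y' ξ) ξ) (x' ξ) := by
  have h := congrArg (fun T : H →L[ℂ] H => T ξ) (hx' (rankOne (y' ξ) ξ))
  simp only [ContinuousLinearMap.mul_apply] at h
  rw [h]
  have hn : ‖ξ‖ = 1 := by
    have h2 : ‖ξ‖ ^ 2 = 1 := by rw [@norm_sq_eq_re_inner ℂ, hξ]; simp
    exact (pow_eq_one_iff_of_nonneg (norm_nonneg ξ) two_ne_zero).1 h2
  simp [rankOne, hξ, hn]
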